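/- If (w, A) with w = t²w₂ + t w₁ + w₀ and A = t²A₂ + tA₁ + A₀ (coefficients t-independent), then the generalized monopole equation *_B(D^B w + Ȧw − Aẇ) = dA + Ȧ∧A holds for all t if and only if the three projective monopole equations *_B(D^B w₂ + A₂w₁ − A₁w₂) = dA₂ + A₂∧A₁, *_B((1/2)D^B w₁ + A₂w₀ − A₀w₂) = (1/2)dA₁ + A₂∧A₀, and *_B(D^B w₀ + A₁w₀ − A₀w₁) = dA₀ + A₁∧A₀ hold. -/
import Mathlib

lemma aux_quad_zero {M : Type*} [AddCommGroup M] [Module ℝ M] (x2 x1 x0 : M) :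
    (∀ t : ℝ, t ^ 2 • x2 + t • x1 + x0 = 0) ↔ (x2 = 0 ∧ x1 = 0 ∧ x0 = 0) := by
  constructor
  · intro h
    have h0 := h 0
    have h1 := h 1
    have hm := h (-1)
    simp only [ne_eq, OfNat.ofNat_ne_zero, not_false_eq_true, zero_pow, zero_smul, zero_add,
      one_pow, one_smul] at h0 h1 hm
    refine ⟨?_, ?_, h0⟩
    · linear_combination (norm := module) (2⁻¹ : ℝ) • h1 + (2⁻¹ : ℝ) • hm - h0
    · linear_combination (norm := module) (2⁻¹ : ℝ) • h1 - (2⁻¹ : ℝ) • hm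
  · rintro ⟨h2, h1, h0⟩ t
    rw [h2, h1, h0]
    simp


/-- Theorem VI of the paper, abstract model of the monopole equations on a
3-dimensional Einstein-Weyl space `B`: for the projective (quadratic) ansatz
`w = t² w₂ + t w₁ + w₀`, `A = t² A₂ + t A₁ + A₀` (coefficients time-independent, so
`ẇ = 2t w₂ + w₁` and `Ȧ = 2t A₂ + A₁`), the generalized monopole equation
`*_B(D^B w + Ȧ w - A ẇ) = dA + Ȧ ∧ A` holds for all `t` if and only if the three
projective monopole equations
`*_B(D^B w₂ + A₂ w₁ - A₁ w₂) = dA₂ + A₂ ∧ A₁`,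
`*_B(½ D^B w₁ + A₂ w₀ - A₀ w₂) = ½ dA₁ + A₂ ∧ A₀`, and
`*_B(D^B w₀ + A₁ w₀ - A₀ w₁) = dA₀ + A₁ ∧ A₀` hold. -/
theorem projective_monopole_equations
    (W Ω1 Ω2 : Type*) [AddCommGroup W] [Module ℝ W]
    [AddCommGroup Ω1] [Module ℝ Ω1] [AddCommGroup Ω2] [Module ℝ Ω2]
    (star : Ω1 →ₗ[ℝ] Ω2)
    (DB : W →ₗ[ℝ] Ω1)
    (d : Ω1 →ₗ[ℝ] Ω2)
    (smul : Ω1 →ₗ[ℝ] W →ₗ[ℝ] Ω1)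
    (wedge : Ω1 →ₗ[ℝ] Ω1 →ₗ[ℝ] Ω2)
    (halt : ∀ a : Ω1, wedge a a = 0)
    (w0 w1 w2 : W) (A0 A1 A2 : Ω1) :
    (∀ t : ℝ,
      star (DB (t ^ 2 • w2 + t • w1 + w0)
          + smul ((2 * t) • A2 + A1) (t ^ 2 • w2 + t • w1 + w0)
          - smul (t ^ 2 • A2 + t • A1 + A0) ((2 * t) • w2 + w1))
        = d (t ^ 2 • A2 + t • A1 + A0)
          + wedge ((2 * t) • A2 + A1) (t ^ 2 • A2 + t • A1 + A0))
    ↔ (star (DB w2 + smul A2 w1 - smul A1 w2) = d A2 + wedge A2 A1 ∧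
       star ((2⁻¹ : ℝ) • DB w1 + smul A2 w0 - smul A0 w2)
          = (2⁻¹ : ℝ) • d A1 + wedge A2 A0 ∧
       star (DB w0 + smul A1 w0 - smul A0 w1) = d A0 + wedge A1 A0) := by
  have hanti : wedge A1 A2 = - wedge A2 A1 := by
    have h := halt (A1 + A2)
    simp only [map_add, LinearMap.add_apply, halt, zero_add, add_zero] at h
    exact eq_neg_of_add_eq_zero_right h
  set x2 := star (DB w2 + smul A2 w1 - smul A1 w2) - (d A2 + wedge A2 A1) with hx2
  set x1 := (star (DB w1) + (2 : ℝ) • star (smul A2 w0) - (2 : ℝ) • star (smul A0 w2))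
      - (d A1 + (2 : ℝ) • wedge A2 A0) with hx1
  set x0 := star (DB w0 + smul A1 w0 - smul A0 w1) - (d A0 + wedge A1 A0) with hx0
  have key : ∀ t : ℝ,
      (star (DB (t ^ 2 • w2 + t • w1 + w0)
          + smul ((2 * t) • A2 + A1) (t ^ 2 • w2 + t • w1 + w0)
          - smul (t ^ 2 • A2 + t • A1 + A0) ((2 * t) • w2 + w1))
        = d (t ^ 2 • A2 + t • A1 + A0)
          + wedge ((2 * t) • A2 + A1) (t ^ 2 • A2 + t • A1 + A0))
      ↔ t ^ 2 • x2 + t • x1 + x0 = 0 := by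
    intro t
    rw [← sub_eq_zero, hx2, hx1, hx0]
    constructor <;> intro h <;>
    · rw [← h]
      simp only [map_add, map_sub, map_smul, LinearMap.add_apply, LinearMap.sub_apply,
        LinearMap.smul_apply, halt, hanti]
      module
  rw [forall_congr' key, aux_quad_zero]
  have e2 : x2 = 0 ↔ star (DB w2 + smul A2 w1 - smul A1 w2) = d A2 + wedge A2 A1 :=
    sub_eq_zero
  have e0 : x0 = 0 ↔ star (DB w0 + smul A1 w0 - smul A0 w1) = d A0 + wedge A1 A0 :=
    sub_eq_zero
  have e1 : x1 = 0 ↔ star ((2⁻¹ : ℝ) • DB w1 + smul A2 w0 - smul A0 w2)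
      = (2⁻¹ : ℝ) • d A1 + wedge A2 A0 := by
    have hrw : x1 = (2 : ℝ) • (star ((2⁻¹ : ℝ) • DB w1 + smul A2 w0 - smul A0 w2)
        - ((2⁻¹ : ℝ) • d A1 + wedge A2 A0)) := by
      rw [hx1]
      simp only [map_add, map_sub, map_smul]
      module
    rw [hrw, smul_eq_zero]
    simp only [OfNat.ofNat_ne_zero, false_or]
    exact sub_eq_zero
  rw [e2, e1, e0]
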